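/- For the cubic Duffing amplitude-response f(X) = ((3/4)μ̃X³ − X(ζ²−1))² + (b̃ζX)² with μ̃ > 0, ζ > 1, b̃ > 0: if (ζ²−1)² > 3 b̃²ζ², then there exist 0 < X₁ < X₂ such that f'(X₁) = f'(X₂) = 0, f is increasing on (0,X₁), decreasing on (X₁,X₂), and increasing on (X₂,∞). -/

import Mathlib

set_option maxHeartbeats 1000000 in
/-- Bistability of the cubic Duffing response: if `(ζ² − 1)² > 3 b² ζ²` then the
amplitude-response `f` has two positive critical points `X₁ < X₂`, being increasing on
`(0, X₁)`, decreasing on `(X₁, X₂)` and increasing on `(X₂, ∞)`. -/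
theorem cubic_duffing_bistability
    (b μ ζ : ℝ) (hb : 0 < b) (hμ : 0 < μ) (hζ : 1 < ζ)
    (hcond : (ζ ^ 2 - 1) ^ 2 > 3 * b ^ 2 * ζ ^ 2) :
    ∃ X₁ X₂ : ℝ, 0 < X₁ ∧ X₁ < X₂ ∧
      deriv (fun X : ℝ =>
        ((3 / 4) * μ * X ^ 3 - X * (ζ ^ 2 - 1)) ^ 2 + (b * ζ * X) ^ 2) X₁ = 0 ∧
      deriv (fun X : ℝ =>
        ((3 / 4) * μ * X ^ 3 - X * (ζ ^ 2 - 1)) ^ 2 + (b * ζ * X) ^ 2) X₂ = 0 ∧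
      StrictMonoOn (fun X : ℝ =>
        ((3 / 4) * μ * X ^ 3 - X * (ζ ^ 2 - 1)) ^ 2 + (b * ζ * X) ^ 2) (Set.Ioo 0 X₁) ∧
      StrictAntiOn (fun X : ℝ =>
        ((3 / 4) * μ * X ^ 3 - X * (ζ ^ 2 - 1)) ^ 2 + (b * ζ * X) ^ 2) (Set.Ioo X₁ X₂) ∧
      StrictMonoOn (fun X : ℝ =>
        ((3 / 4) * μ * X ^ 3 - X * (ζ ^ 2 - 1)) ^ 2 + (b * ζ * X) ^ 2) (Set.Ioi X₂) := by
  set c : ℝ := ζ ^ 2 - 1 with hc_def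
  set d : ℝ := b * ζ with hd_def
  have hc : 0 < c := by nlinarith
  have hd : 0 < d := by positivity
  have hcd : 3 * d ^ 2 < c ^ 2 := by rw [hd_def]; nlinarith
  set s : ℝ := Real.sqrt (c ^ 2 - 3 * d ^ 2) with hs_def
  have hs2 : s ^ 2 = c ^ 2 - 3 * d ^ 2 := Real.sq_sqrt (by linarith)
  have hs_pos : 0 < s := Real.sqrt_pos.2 (by linarith)
  have hs_lt : s < c := by nlinarith [hs2, hs_pos]
  set u₁ : ℝ := (8 * c - 4 * s) / (9 * μ) with hu₁
  set u₂ : ℝ := (8 * c + 4 * s) / (9 * μ) with hu₂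
  clear_value c d s u₁ u₂
  have hu₁_pos : 0 < u₁ := by
    rw [hu₁]; exact div_pos (by linarith) (by linarith)
  have hu₂_pos : 0 < u₂ := by
    rw [hu₂]; exact div_pos (by linarith) (by linarith)
  have hu_lt : u₁ < u₂ := by
    have h9 : (0:ℝ) < 9 * μ := by linarith
    rw [hu₁, hu₂, div_lt_div_iff_of_pos_right h9]
    linarith
  set f : ℝ → ℝ := fun X : ℝ =>
      ((3 / 4) * μ * X ^ 3 - X * c) ^ 2 + (d * X) ^ 2 with hf_def
  have hder : ∀ x : ℝ, HasDerivAt f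
      ((27 / 8) * μ ^ 2 * x * (x ^ 2 - u₁) * (x ^ 2 - u₂)) x := by
    intro x
    have h := ((((hasDerivAt_pow 3 x).const_mul ((3:ℝ) / 4 * μ)).sub
        ((hasDerivAt_id x).mul_const c)).pow 2).add
        (((hasDerivAt_id x).const_mul d).pow 2)
    refine h.congr_deriv ?_
    symm
    simp only [Pi.sub_apply, id]
    rw [hu₁, hu₂]
    have hμ' : (9:ℝ) * μ ≠ 0 := by positivity
    field_simp
    ring_nf
    linear_combination (-1728 : ℝ) * x * hs2
  set X₁ : ℝ := Real.sqrt u₁ with hX₁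
  set X₂ : ℝ := Real.sqrt u₂ with hX₂
  clear_value X₁ X₂
  have hX₁_pos : 0 < X₁ := by rw [hX₁]; exact Real.sqrt_pos.2 hu₁_pos
  have hX₂_pos : 0 < X₂ := by rw [hX₂]; exact Real.sqrt_pos.2 hu₂_pos
  have hX₁sq : X₁ ^ 2 = u₁ := by rw [hX₁]; exact Real.sq_sqrt hu₁_pos.le
  have hX₂sq : X₂ ^ 2 = u₂ := by rw [hX₂]; exact Real.sq_sqrt hu₂_pos.le
  have hXlt : X₁ < X₂ := by rw [hX₁, hX₂]; exact Real.sqrt_lt_sqrt hu₁_pos.le hu_lt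
  have hdiff : Differentiable ℝ f := fun x => (hder x).differentiableAt
  have hcont : Continuous f := hdiff.continuous
  refine ⟨X₁, X₂, hX₁_pos, hXlt, ?_, ?_, ?_, ?_, ?_⟩
  · rw [(hder X₁).deriv, hX₁sq]; ring
  · rw [(hder X₂).deriv, hX₂sq]; ring
  · apply strictMonoOn_of_deriv_pos (convex_Ioo 0 X₁) (hcont.continuousOn)
    intro x hx
    rw [interior_Ioo] at hx
    rw [(hder x).deriv]
    have h1 : x ^ 2 < u₁ := by rw [← hX₁sq]; nlinarith [hx.1, hx.2]
    have h2 : x ^ 2 < u₂ := by linarith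
    have h3 : 0 < (27 / 8) * μ ^ 2 * x := by nlinarith [hx.1, sq_nonneg μ, mul_pos hμ hμ]
    have key : (27:ℝ) / 8 * μ ^ 2 * x * (x ^ 2 - u₁) * (x ^ 2 - u₂)
        = (27 / 8 * μ ^ 2 * x) * ((u₁ - x ^ 2) * (u₂ - x ^ 2)) := by ring
    rw [key]
    exact mul_pos h3 (mul_pos (by linarith) (by linarith))
  · apply strictAntiOn_of_deriv_neg (convex_Ioo X₁ X₂) (hcont.continuousOn)
    intro x hx
    rw [interior_Ioo] at hx
    rw [(hder x).deriv]
    have hx0 : 0 < x := lt_trans hX₁_pos hx.1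
    have h1 : u₁ < x ^ 2 := by rw [← hX₁sq]; nlinarith [hx.1, hX₁_pos]
    have h2 : x ^ 2 < u₂ := by rw [← hX₂sq]; nlinarith [hx.2, hx0]
    have h3 : 0 < (27 / 8) * μ ^ 2 * x := by positivity
    have key : (27:ℝ) / 8 * μ ^ 2 * x * (x ^ 2 - u₁) * (x ^ 2 - u₂)
        = -((27 / 8 * μ ^ 2 * x) * ((x ^ 2 - u₁) * (u₂ - x ^ 2))) := by ring
    rw [key, neg_lt_zero]
    exact mul_pos h3 (mul_pos (by linarith) (by linarith))
  · apply strictMonoOn_of_deriv_pos (convex_Ioi X₂) (hcont.continuousOn)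
    intro x hx
    rw [interior_Ioi] at hx
    rw [(hder x).deriv]
    have hx0 : 0 < x := lt_trans hX₂_pos hx
    have h2 : u₂ < x ^ 2 := by rw [← hX₂sq]; nlinarith [Set.mem_Ioi.mp hx, hX₂_pos]
    have h1 : u₁ < x ^ 2 := by linarith
    have h3 : 0 < (27 / 8) * μ ^ 2 * x := by positivity
    exact mul_pos (mul_pos h3 (by linarith)) (by linarith)
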